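/- Let p, q, N be real numbers with 0 < q < 2 < p and 2 < N < 2(p−q)/(p−2), and set α := (N−q)/(2−q) − p/(p−2). Let (X,d) be a metric space, μ a Borel measure on X, x₀ ∈ X and A ∈ (0,∞), and suppose lim_{ρ→0⁺} μ(B_ρ(x₀))/(ω_N ρ^N) = A. Then liminf_{λ→0⁺} λ^{−α} ∫_X (λ + d(x₀,x)^{2−q})^{p/(2−p)} d(x₀,x)^{−q} dμ(x) ≥ A ω_N N ∫₀^∞ (1 + y^{2−q})^{p/(2−p)} y^{N−q−1} dy. -/

import Mathlib

open MeasureTheory Set Filter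
open scoped ENNReal

/-- `ω_N = π^{N/2} / Γ(N/2 + 1)`, the volume of the unit ball in dimension `N`. -/
noncomputable def omegaN (N : ℝ) : ℝ := Real.pi ^ (N / 2) / Real.Gamma (N / 2 + 1)

private lemma lintegral_Ioo_mul_left' {c : ℝ} (hc : 0 < c) (T : ℝ) (F : ℝ → ℝ≥0∞) (hF : Measurable F) :
    ∫⁻ s in Ioo 0 (c * T), F s = ENNReal.ofReal c * ∫⁻ y in Ioo 0 T, F (c * y) := by
  have hmap := Real.map_volume_mul_left (ne_of_gt hc)
  have hpre : (fun y : ℝ => c * y) ⁻¹' (Ioo 0 (c * T)) = Ioo 0 T := by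
    ext y
    simp only [mem_preimage, mem_Ioo]
    constructor
    · rintro ⟨h1, h2⟩
      refine ⟨?_, by nlinarith⟩
      nlinarith
    · rintro ⟨h1, h2⟩
      exact ⟨by positivity, by nlinarith⟩
  have hind : Measurable ((Ioo (0:ℝ) (c*T)).indicator F) :=
    hF.indicator measurableSet_Ioo
  have key : ∫⁻ y in Ioo 0 T, F (c * y)
      = ENNReal.ofReal |c⁻¹| * ∫⁻ s in Ioo 0 (c*T), F s := by
    calc ∫⁻ y in Ioo 0 T, F (c * y)
        = ∫⁻ y, ((Ioo (0:ℝ) (c*T)).indicator F) (c * y) := by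
          rw [← lintegral_indicator measurableSet_Ioo]
          congr 1
          ext y
          rw [← hpre]
          exact (indicator_comp_right (fun y : ℝ => c * y) (g := F)).symm ▸ rfl
      _ = ∫⁻ x, ((Ioo (0:ℝ) (c*T)).indicator F) x ∂(Measure.map (fun y : ℝ => c * y) volume) :=
          (lintegral_map hind (measurable_const_mul c)).symm
      _ = ENNReal.ofReal |c⁻¹| * ∫⁻ s in Ioo 0 (c*T), F s := by
          rw [hmap, lintegral_smul_measure, lintegral_indicator measurableSet_Ioo, smul_eq_mul]
  rw [key, ← mul_assoc, abs_of_pos (inv_pos.2 hc), ← ENNReal.ofReal_mul hc.le,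
    mul_inv_cancel₀ (ne_of_gt hc), ENNReal.ofReal_one, one_mul]

private lemma ofReal_integral_le_lintegral_ofReal' {α : Type*} [MeasurableSpace α] {μ : Measure α}
    {f : α → ℝ} (hf : 0 ≤ᵐ[μ] f) :
    ENNReal.ofReal (∫ x, f x ∂μ) ≤ ∫⁻ x, ENNReal.ofReal (f x) ∂μ := by
  by_cases hi : Integrable f μ
  · exact le_of_eq (ofReal_integral_eq_lintegral_ofReal hi hf)
  · rw [integral_undef hi]
    simp

private lemma contRpowConst {c : ℝ} (hc : 0 ≤ c) : Continuous fun s : ℝ => s ^ c := by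
  rw [continuous_iff_continuousAt]
  intro x
  exact Real.continuousAt_rpow_const x c (Or.inr hc)

private lemma lintegral_density_Ioc {N m : ℝ} (hN : 1 < N) (hm : 0 ≤ m) :
    ∫⁻ s in Ioc 0 m, ENNReal.ofReal (N * s ^ (N - 1)) = ENNReal.ofReal (m ^ N) := by
  have hN0 : (0:ℝ) < N := by linarith
  have hcont : Continuous fun s : ℝ => N * s ^ (N - 1) :=
    continuous_const.mul (contRpowConst (by linarith))
  rw [← ofReal_integral_eq_lintegral_ofReal (hcont.integrableOn_Ioc)]
  · congr 1
    rw [← intervalIntegral.integral_of_le hm, intervalIntegral.integral_const_mul,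
      integral_rpow (Or.inl (by linarith))]
    have h1 : N - 1 + 1 = N := by ring
    rw [h1, Real.zero_rpow (ne_of_gt hN0)]
    field_simp
    simp
  · filter_upwards [ae_restrict_mem measurableSet_Ioc] with s hs
    exact mul_nonneg hN0.le (Real.rpow_nonneg hs.1.le _)

private lemma scaling_identity (p q N α lam y : ℝ) (hq2 : q < 2) (hp : 2 < p)
    (hlam : 0 < lam) (hy : 0 < y) (hα : α = (N - q) / (2 - q) - p / (p - 2)) :
    lam ^ (1/(2-q)) * (N * (lam ^ (1/(2-q)) * y) ^ (N - 1) *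
      ((lam + (lam ^ (1/(2-q)) * y) ^ (2 - q)) ^ (p / (2 - p)) * (lam ^ (1/(2-q)) * y) ^ (-q)))
    = lam ^ α * (N * ((1 + y ^ (2 - q)) ^ (p / (2 - p)) * y ^ (N - q - 1))) := by
  have hq2' : (0:ℝ) < 2 - q := by linarith
  set c := lam ^ (1/(2-q)) with hc_def
  have hc : 0 < c := Real.rpow_pos_of_pos hlam _
  have hcq : c ^ (2 - q) = lam := by
    rw [hc_def, ← Real.rpow_mul hlam.le, one_div, inv_mul_cancel₀ (ne_of_gt hq2'),
      Real.rpow_one]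
  have hB : (0:ℝ) ≤ 1 + y ^ (2 - q) := by
    have := Real.rpow_nonneg hy.le (2 - q); linarith
  rw [Real.mul_rpow hc.le hy.le, Real.mul_rpow hc.le hy.le, Real.mul_rpow hc.le hy.le, hcq]
  have hfact : lam + lam * y ^ (2 - q) = lam * (1 + y ^ (2 - q)) := by ring
  rw [hfact, Real.mul_rpow hlam.le hB]
  have hE2 : y ^ (N - q - 1) = y ^ (N - 1) * y ^ (-q) := by
    rw [show N - q - 1 = N - 1 + -q by ring, Real.rpow_add hy]
  have hE1 : lam ^ α = c * c ^ (N - 1) * c ^ (-q) * lam ^ (p / (2 - p)) := by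
    have h1 : c ^ (N - 1) = lam ^ (1/(2-q) * (N - 1)) := by
      rw [hc_def, ← Real.rpow_mul hlam.le]
    have h2 : c ^ (-q) = lam ^ (1/(2-q) * (-q)) := by
      rw [hc_def, ← Real.rpow_mul hlam.le]
    have hexp : α = 1/(2-q) + 1/(2-q) * (N - 1) + 1/(2-q) * (-q) + p / (2 - p) := by
      rw [hα]
      have h2p : (2:ℝ) - p ≠ 0 := by linarith
      have hp2 : (p:ℝ) - 2 ≠ 0 := by linarith
      field_simp
      ring
    rw [h1, h2, hc_def, ← Real.rpow_add hlam, ← Real.rpow_add hlam, ← Real.rpow_add hlam, ← hexp]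
  rw [hE1, hE2]
  ring

/-- If the small-ball density of `μ` at `x₀` tends to `A`, then
`liminf_{λ → 0⁺} λ^{-α} ∫_X (λ + d^{2-q})^{p/(2-p)} d^{-q} dμ ≥
  A ω_N N ∫₀^∞ (1 + y^{2-q})^{p/(2-p)} y^{N-q-1} dy`. -/
theorem ckn_liminf_ge (p q N α : ℝ)
    (hq : 0 < q) (hq2 : q < 2) (hp : 2 < p)
    (hN1 : 2 < N) (hN2 : N < 2 * (p - q) / (p - 2))
    (hα : α = (N - q) / (2 - q) - p / (p - 2))
    {X : Type*} [MetricSpace X] [MeasurableSpace X] [BorelSpace X]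
    (μ : Measure X) (x₀ : X) (A : ℝ) (hA : 0 < A)
    (hlim : Tendsto (fun ρ => (μ (Metric.ball x₀ ρ)).toReal / (omegaN N * ρ ^ N))
      (nhdsWithin 0 (Ioi 0)) (nhds A)) :
    ENNReal.ofReal (A * omegaN N * N *
        ∫ y in Ioi (0:ℝ), (1 + y ^ (2 - q)) ^ (p / (2 - p)) * y ^ (N - q - 1)) ≤
      liminf (fun lam : ℝ =>
          ENNReal.ofReal (lam ^ (-α)) *
            ∫⁻ x, ENNReal.ofReal ((lam + dist x₀ x ^ (2 - q)) ^ (p / (2 - p))) *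
              ENNReal.ofReal (dist x₀ x) ^ (-q) ∂μ)
        (nhdsWithin 0 (Ioi 0)) := by
  have hq2' : (0:ℝ) < 2 - q := by linarith
  have hp2 : (0:ℝ) < p - 2 := by linarith
  have hp0 : (0:ℝ) < p := by linarith
  have hN0 : (0:ℝ) < N := by linarith
  have hN1' : (1:ℝ) < N := by linarith
  have hω : 0 < omegaN N :=
    div_pos (Real.rpow_pos_of_pos Real.pi_pos _) (Real.Gamma_pos_of_pos (by linarith))
  set ω := omegaN N with hωdef
  -- the function g
  set g : ℝ → ℝ → ℝ := fun lam r => (lam + r ^ (2 - q)) ^ (p / (2 - p)) * r ^ (-q) with hgdef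
  have g_meas : ∀ lam, Measurable (g lam) := by
    intro lam
    rw [hgdef]
    fun_prop
  have g_nonneg : ∀ lam r, 0 ≤ lam → 0 ≤ r → 0 ≤ g lam r := by
    intro lam r hl hr
    exact mul_nonneg (Real.rpow_nonneg (by positivity) _) (Real.rpow_nonneg hr _)
  have g_anti : ∀ lam a b, 0 ≤ lam → 0 < a → a ≤ b → g lam b ≤ g lam a := by
    intro lam a b hl ha hab
    have hb : 0 < b := lt_of_lt_of_le ha hab
    have hbase : 0 < lam + a ^ (2 - q) := by
      have := Real.rpow_pos_of_pos ha (2 - q); linarith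
    have h1 : (lam + b ^ (2 - q)) ^ (p / (2 - p)) ≤ (lam + a ^ (2 - q)) ^ (p / (2 - p)) :=
      Real.rpow_le_rpow_of_nonpos hbase
        (by have := Real.rpow_le_rpow ha.le hab (by linarith : (0:ℝ) ≤ 2 - q); linarith)
        (by apply div_nonpos_of_nonneg_of_nonpos <;> linarith)
    have h2 : b ^ (-q) ≤ a ^ (-q) :=
      Real.rpow_le_rpow_of_nonpos ha hab (by linarith)
    exact mul_le_mul h1 h2 (Real.rpow_nonneg hb.le _) (Real.rpow_nonneg (by positivity) _)
  -- the target lintegral family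
  set G : ℝ → ℝ≥0∞ := fun y =>
    ENNReal.ofReal (N * ((1 + y ^ (2 - q)) ^ (p / (2 - p)) * y ^ (N - q - 1))) with hGdef
  have hGmeas : Measurable G := by rw [hGdef]; fun_prop
  set K : ℝ → ℝ≥0∞ := fun T => ∫⁻ y in Ioo 0 T, G y with hKdef
  -- density lower bound for small balls
  have hball : ∀ ε : ℝ, 0 < ε → ε < A → ∃ ρ₀ > 0, ∀ ρ, 0 < ρ → ρ < ρ₀ →
      ENNReal.ofReal ((A - ε) * ω * ρ ^ N) ≤ μ (Metric.ball x₀ ρ) := by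
    intro ε hε hεA
    have hev : ∀ᶠ ρ in nhdsWithin 0 (Ioi 0),
        A - ε < (μ (Metric.ball x₀ ρ)).toReal / (ω * ρ ^ N) :=
      hlim.eventually (eventually_gt_nhds (by linarith))
    rw [eventually_nhdsWithin_iff, Metric.eventually_nhds_iff] at hev
    obtain ⟨ρ₀, hρ₀, h⟩ := hev
    refine ⟨ρ₀, hρ₀, fun ρ hρ hρlt => ?_⟩
    have h1 := h (by rw [Real.dist_eq, sub_zero, abs_of_pos hρ]; exact hρlt) hρ
    have hden : 0 < ω * ρ ^ N := mul_pos hω (Real.rpow_pos_of_pos hρ _)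
    have h2 : (A - ε) * (ω * ρ ^ N) < (μ (Metric.ball x₀ ρ)).toReal :=
      (lt_div_iff₀ hden).mp h1
    refine ENNReal.ofReal_le_of_le_toReal ?_
    rw [mul_assoc]
    exact h2.le
  -- the point x₀ has measure zero
  have hx0 : μ {x₀} = 0 := by
    have hev : ∀ᶠ ρ in nhdsWithin 0 (Ioi 0),
        (μ (Metric.ball x₀ ρ)).toReal / (ω * ρ ^ N) ∈ Ioo (A/2) (A+1) :=
      hlim.eventually (Ioo_mem_nhds (by linarith) (by linarith))
    rw [eventually_nhdsWithin_iff, Metric.eventually_nhds_iff] at hev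
    obtain ⟨ρ₁, hρ₁, h⟩ := hev
    have key : ∀ ρ, 0 < ρ → ρ < ρ₁ → μ {x₀} ≤ ENNReal.ofReal ((A+1) * (ω * ρ ^ N)) := by
      intro ρ hρ hρlt
      have h1 := h (by rw [Real.dist_eq, sub_zero, abs_of_pos hρ]; exact hρlt) hρ
      have hden : 0 < ω * ρ ^ N := mul_pos hω (Real.rpow_pos_of_pos hρ _)
      have hne : μ (Metric.ball x₀ ρ) ≠ ⊤ := by
        intro htop
        rw [htop] at h1
        simp only [ENNReal.toReal_top, zero_div, mem_Ioo] at h1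
        linarith [h1.1]
      have h2 : (μ (Metric.ball x₀ ρ)).toReal ≤ (A+1) * (ω * ρ ^ N) :=
        le_of_lt ((div_lt_iff₀ hden).mp h1.2)
      calc μ {x₀} ≤ μ (Metric.ball x₀ ρ) :=
            measure_mono (by simp [Metric.mem_ball, hρ])
        _ ≤ ENNReal.ofReal ((A+1) * (ω * ρ ^ N)) :=
            (ENNReal.le_ofReal_iff_toReal_le hne (by positivity)).mpr h2
    have hseq : Tendsto (fun k : ℕ => ENNReal.ofReal ((A+1) * (ω * (ρ₁ / (k+2)) ^ N)))
        atTop (nhds 0) := by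
      have h0 : Tendsto (fun k : ℕ => ρ₁ / ((k:ℝ)+2)) atTop (nhds 0) := by
        apply Tendsto.div_atTop tendsto_const_nhds
        exact tendsto_atTop_add_const_right _ _ tendsto_natCast_atTop_atTop
      have h1 : Tendsto (fun k : ℕ => (ρ₁ / ((k:ℝ)+2)) ^ N) atTop (nhds 0) := by
        have := ((contRpowConst hN0.le).tendsto 0).comp h0
        simpa [Function.comp_def, Real.zero_rpow (ne_of_gt hN0)] using this
      have h2 : Tendsto (fun k : ℕ => (A+1) * (ω * (ρ₁ / (k+2)) ^ N)) atTop (nhds 0) := by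
        have := (h1.const_mul ω).const_mul (A+1)
        simpa using this
      have := (ENNReal.continuous_ofReal.tendsto 0).comp h2
      simpa [Function.comp_def] using this
    have hb : ∀ k : ℕ, μ {x₀} ≤ ENNReal.ofReal ((A+1) * (ω * (ρ₁ / (k+2)) ^ N)) := by
      intro k
      refine key _ (by positivity) ?_
      rw [div_lt_iff₀ (by positivity)]
      nlinarith [hρ₁]
    have := ge_of_tendsto hseq (Eventually.of_forall hb)
    exact le_antisymm this zero_le
  -- abbreviation for the liminf function
  set F : ℝ → ℝ≥0∞ := fun lam =>
    ENNReal.ofReal (lam ^ (-α)) *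
      ∫⁻ x, ENNReal.ofReal ((lam + dist x₀ x ^ (2 - q)) ^ (p / (2 - p))) *
        ENNReal.ofReal (dist x₀ x) ^ (-q) ∂μ with hFdef
  -- main eventual bound
  have main : ∀ ε : ℝ, 0 < ε → ε < A → ∀ T : ℝ, 0 < T →
      ∀ᶠ lam in nhdsWithin (0:ℝ) (Ioi 0),
        ENNReal.ofReal ((A - ε) * ω) * K T ≤ F lam := by
    intro ε hε hεA T hT
    obtain ⟨ρ₀, hρ₀, hρball⟩ := hball ε hε hεA
    have hAε : (0:ℝ) ≤ (A - ε) * ω := mul_nonneg (by linarith) hω.le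
    have hδpos : 0 < (ρ₀ / T) ^ (2 - q) := Real.rpow_pos_of_pos (div_pos hρ₀ hT) _
    filter_upwards [Ioo_mem_nhdsGT_of_mem ⟨le_refl (0:ℝ), hδpos⟩] with lam hlam
    obtain ⟨hlam0, hlamδ⟩ := hlam
    set c : ℝ := lam ^ (1/(2-q)) with hc_def
    have hc : 0 < c := Real.rpow_pos_of_pos hlam0 _
    set R : ℝ := c * T with hR_def
    have hR : 0 < R := mul_pos hc hT
    have hRρ : R < ρ₀ := by
      have hcρ : c < ρ₀ / T := by
        have h1 : lam ^ (1/(2-q)) < ((ρ₀/T) ^ (2-q)) ^ (1/(2-q)) :=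
          Real.rpow_lt_rpow hlam0.le hlamδ (by positivity)
        rwa [← Real.rpow_mul (by positivity), mul_one_div, div_self (ne_of_gt hq2'),
          Real.rpow_one] at h1
      calc R = c * T := hR_def
        _ < (ρ₀/T) * T := mul_lt_mul_of_pos_right hcρ hT
        _ = ρ₀ := by field_simp
    set U : Set X := Metric.ball x₀ R \ {x₀} with hU_def
    have hU : MeasurableSet U :=
      Metric.isOpen_ball.measurableSet.diff (measurableSet_singleton x₀)
    have hgd_meas : Measurable fun x => g lam (dist x₀ x) :=
      (g_meas lam).comp (continuous_const.dist continuous_id).measurable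
    -- step a: restrict to U and rewrite integrand
    have hptwise : ∀ x ∈ U, ENNReal.ofReal ((lam + dist x₀ x ^ (2 - q)) ^ (p / (2 - p))) *
        ENNReal.ofReal (dist x₀ x) ^ (-q) = ENNReal.ofReal (g lam (dist x₀ x)) := by
      intro x hx
      have hd : 0 < dist x₀ x := by
        rcases hx with ⟨-, hne⟩
        have hxx : x ≠ x₀ := by simpa [mem_singleton_iff] using hne
        exact dist_pos.mpr (Ne.symm hxx)
      rw [ENNReal.ofReal_rpow_of_pos hd,
        ← ENNReal.ofReal_mul (Real.rpow_nonneg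
          (add_nonneg hlam0.le (Real.rpow_nonneg dist_nonneg _)) _)]
    have stepa : ∫⁻ x in U, ENNReal.ofReal (g lam (dist x₀ x)) ∂μ ≤
        ∫⁻ x, ENNReal.ofReal ((lam + dist x₀ x ^ (2 - q)) ^ (p / (2 - p))) *
          ENNReal.ofReal (dist x₀ x) ^ (-q) ∂μ := by
      rw [← setLIntegral_congr_fun hU hptwise]
      exact setLIntegral_le_lintegral _ _
    -- step b: layer-cake on the μ side
    have stepb : ∫⁻ x in U, ENNReal.ofReal (g lam (dist x₀ x)) ∂μ
        = ∫⁻ t in Ioi (0:ℝ), μ ({x | t < g lam (dist x₀ x)} ∩ U) := by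
      rw [lintegral_eq_lintegral_meas_lt (μ.restrict U)
        (ae_of_all _ fun x => g_nonneg lam _ hlam0.le dist_nonneg) hgd_meas.aemeasurable]
      refine setLIntegral_congr_fun measurableSet_Ioi (fun t ht => ?_)
      exact Measure.restrict_apply (hgd_meas measurableSet_Ioi)
    -- the density measure
    set hd : ℝ → ℝ≥0∞ := fun s => ENNReal.ofReal (N * s ^ (N - 1)) with hhd
    have hd_meas : Measurable hd := by rw [hhd]; fun_prop
    set ν : Measure ℝ := (volume.restrict (Ioo 0 R)).withDensity hd with hν
    -- step c: per-t comparison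
    have stepc : ∀ t ∈ Ioi (0:ℝ), ENNReal.ofReal ((A - ε) * ω) * ν {s | t < g lam s}
        ≤ μ ({x | t < g lam (dist x₀ x)} ∩ U) := by
      intro t ht
      have hset : MeasurableSet {s : ℝ | t < g lam s} :=
        measurableSet_lt measurable_const (g_meas lam)
      have hνval : ν {s | t < g lam s} = ∫⁻ s in {s | t < g lam s} ∩ Ioo 0 R, hd s := by
        rw [hν, withDensity_apply _ hset, Measure.restrict_restrict hset]
      by_cases hne : ({s | t < g lam s} ∩ Ioo 0 R).Nonempty
      · have hbdd : BddAbove ({s | t < g lam s} ∩ Ioo 0 R) :=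
          bddAbove_Ioo.mono inter_subset_right
        set S := {s | t < g lam s} ∩ Ioo 0 R with hS
        set m := sSup S with hm
        obtain ⟨s₀, hs₀⟩ := hne
        have hm0 : 0 < m := lt_of_lt_of_le hs₀.2.1 (le_csSup hbdd hs₀)
        have hmR : m ≤ R := csSup_le ⟨s₀, hs₀⟩ (fun s hs => hs.2.2.le)
        have hIoo : Ioo 0 m ⊆ S := by
          intro s hs
          obtain ⟨s', hs'S, hss'⟩ := exists_lt_of_lt_csSup ⟨s₀, hs₀⟩ hs.2
          exact ⟨lt_of_lt_of_le hs'S.1 (g_anti lam s s' hlam0.le hs.1 hss'.le),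
            hs.1, hss'.trans hs'S.2.2⟩
        have hSsub : S ⊆ Ioc 0 m := fun s hs => ⟨hs.2.1, le_csSup hbdd hs⟩
        have hν_le : ν {s | t < g lam s} ≤ ENNReal.ofReal (m ^ N) := by
          rw [hνval]
          exact le_trans (lintegral_mono_set hSsub)
            (le_of_eq (lintegral_density_Ioc hN1' hm0.le))
        have hballsub : Metric.ball x₀ m \ {x₀} ⊆ {x | t < g lam (dist x₀ x)} ∩ U := by
          rintro x ⟨hxm, hxne⟩
          have hxx : x ≠ x₀ := by simpa [mem_singleton_iff] using hxne
          have hd0 : 0 < dist x₀ x := dist_pos.mpr (Ne.symm hxx)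
          have hdm : dist x₀ x < m := by rwa [Metric.mem_ball, dist_comm] at hxm
          obtain ⟨s, hs1, hs2⟩ := exists_between hdm
          have hsS := hIoo ⟨hd0.trans hs1, hs2⟩
          refine ⟨lt_of_lt_of_le hsS.1 (g_anti lam _ s hlam0.le hd0 hs1.le), ?_, hxne⟩
          rw [Metric.mem_ball, dist_comm]
          exact hdm.trans_le hmR
        calc ENNReal.ofReal ((A - ε) * ω) * ν {s | t < g lam s}
            ≤ ENNReal.ofReal ((A - ε) * ω) * ENNReal.ofReal (m ^ N) :=
              mul_le_mul_right hν_le _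
          _ = ENNReal.ofReal ((A - ε) * ω * m ^ N) := (ENNReal.ofReal_mul hAε).symm
          _ ≤ μ (Metric.ball x₀ m) := hρball m hm0 (lt_of_le_of_lt hmR hRρ)
          _ = μ (Metric.ball x₀ m \ {x₀}) := (measure_diff_null hx0).symm
          _ ≤ μ ({x | t < g lam (dist x₀ x)} ∩ U) := measure_mono hballsub
      · have hempty : {s | t < g lam s} ∩ Ioo 0 R = ∅ :=
          not_nonempty_iff_eq_empty.mp hne
        rw [hνval, hempty]
        simp
    -- step d: layer-cake on the ν side
    have hae_ν : ∀ᵐ s ∂ν, s ∈ Ioo 0 R :=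
      (ae_restrict_mem measurableSet_Ioo).filter_mono
        (withDensity_absolutelyContinuous (volume.restrict (Ioo 0 R)) hd).ae_le
    have stepd : ∫⁻ t in Ioi (0:ℝ), ν {s | t < g lam s}
        = ∫⁻ s in Ioo 0 R, ENNReal.ofReal (N * s ^ (N - 1) * g lam s) := by
      rw [← lintegral_eq_lintegral_meas_lt ν
        (hae_ν.mono fun s hs => g_nonneg lam s hlam0.le hs.1.le) (g_meas lam).aemeasurable]
      rw [hν, lintegral_withDensity_eq_lintegral_mul _ hd_meas
        ((g_meas lam).ennreal_ofReal)]
      refine setLIntegral_congr_fun measurableSet_Ioo (fun s hs => ?_)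
      simp only [Pi.mul_apply, hhd]
      rw [← ENNReal.ofReal_mul (mul_nonneg hN0.le (Real.rpow_nonneg hs.1.le _))]
    -- step e: scaling
    have stepe : ∫⁻ s in Ioo 0 R, ENNReal.ofReal (N * s ^ (N - 1) * g lam s)
        = ENNReal.ofReal (lam ^ α) * K T := by
      have hFmeas : Measurable fun s : ℝ => ENNReal.ofReal (N * s ^ (N - 1) * g lam s) :=
        ((measurable_const.mul (by fun_prop : Measurable fun s : ℝ => s ^ (N-1))).mul
          (g_meas lam)).ennreal_ofReal
      rw [hR_def, lintegral_Ioo_mul_left' hc T _ hFmeas, hKdef,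
        ← lintegral_const_mul' _ _ ENNReal.ofReal_ne_top,
        ← lintegral_const_mul' _ _ ENNReal.ofReal_ne_top]
      refine setLIntegral_congr_fun measurableSet_Ioo (fun y hy => ?_)
      simp only [hGdef, hgdef]
      rw [← ENNReal.ofReal_mul hc.le, ← ENNReal.ofReal_mul (Real.rpow_pos_of_pos hlam0 α).le]
      congr 1
      rw [hc_def]
      exact scaling_identity p q N α lam y hq2 hp hlam0 hy.1 hα
    -- combine
    have hcancel : ENNReal.ofReal (lam ^ (-α)) * ENNReal.ofReal (lam ^ α) = 1 := by
      rw [← ENNReal.ofReal_mul (Real.rpow_nonneg hlam0.le _), ← Real.rpow_add hlam0]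
      simp
    have chain : ENNReal.ofReal ((A - ε) * ω) * (ENNReal.ofReal (lam ^ α) * K T) ≤
        ∫⁻ x in U, ENNReal.ofReal (g lam (dist x₀ x)) ∂μ := by
      rw [stepb, ← stepe, ← stepd, ← lintegral_const_mul' _ _ ENNReal.ofReal_ne_top]
      exact lintegral_mono_ae ((ae_restrict_mem measurableSet_Ioi).mono fun t ht => stepc t ht)
    have hassoc : ∀ u v w z : ℝ≥0∞, u * (v * (w * z)) = u * w * (v * z) := fun u v w z => by
      ring
    calc ENNReal.ofReal ((A - ε) * ω) * K T
        = ENNReal.ofReal (lam ^ (-α)) *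
            (ENNReal.ofReal ((A - ε) * ω) * (ENNReal.ofReal (lam ^ α) * K T)) := by
          rw [hassoc, hcancel, one_mul]
      _ ≤ ENNReal.ofReal (lam ^ (-α)) *
            ∫⁻ x in U, ENNReal.ofReal (g lam (dist x₀ x)) ∂μ := mul_le_mul_right chain _
      _ ≤ F lam := by
          rw [hFdef]
          exact mul_le_mul_right stepa _
  -- liminf lower bound for each ε, T
  have hliminf : ∀ ε : ℝ, 0 < ε → ε < A → ∀ T : ℝ, 0 < T →
      ENNReal.ofReal ((A - ε) * ω) * K T ≤ liminf F (nhdsWithin (0:ℝ) (Ioi 0)) := by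
    intro ε hε hεA T hT
    exact le_liminf_of_le (by isBoundedDefault) (main ε hε hεA T hT)
  -- sup of K over ℕ
  have hKsup : (∫⁻ y in Ioi (0:ℝ), G y) = ⨆ n : ℕ, K (n:ℝ) := by
    have hmono : Monotone fun n : ℕ => (Ioo (0:ℝ) (n:ℝ)).indicator G := by
      intro a b hab
      exact indicator_le_indicator_of_subset
        (Ioo_subset_Ioo_right (by exact_mod_cast hab)) (fun _ => zero_le)
    have hKind : ∀ n : ℕ, K (n:ℝ) = ∫⁻ y, (Ioo (0:ℝ) (n:ℝ)).indicator G y := by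
      intro n
      rw [hKdef]
      exact (lintegral_indicator measurableSet_Ioo _).symm
    rw [← lintegral_indicator measurableSet_Ioi]
    simp_rw [hKind]
    rw [← lintegral_iSup (fun n => hGmeas.indicator measurableSet_Ioo) hmono]
    congr 1
    funext y
    by_cases hy : 0 < y
    · obtain ⟨n, hn⟩ := exists_nat_gt y
      rw [indicator_of_mem (by exact hy : y ∈ Ioi (0:ℝ)) G]
      refine le_antisymm (le_iSup_of_le n (le_of_eq (indicator_of_mem (mem_Ioo.mpr ⟨hy, hn⟩) G).symm)) ?_
      exact iSup_le fun k => Set.indicator_le_self _ _ y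
    · have h0 : ∀ n : ℕ, (Ioo (0:ℝ) (n:ℝ)).indicator G y = 0 :=
        fun n => indicator_of_notMem (fun hmem => hy hmem.1) _
      rw [indicator_of_notMem (by exact hy : y ∉ Ioi (0:ℝ)) G]
      simp [h0]
  -- bound the goal constant by ofReal (A ω) * lintegral of G
  have hGL : ENNReal.ofReal (A * ω * N *
        ∫ y in Ioi (0:ℝ), (1 + y ^ (2 - q)) ^ (p / (2 - p)) * y ^ (N - q - 1))
      ≤ ENNReal.ofReal (A * ω) * ∫⁻ y in Ioi (0:ℝ), G y := by
    have h1 : A * ω * N * (∫ y in Ioi (0:ℝ), (1 + y ^ (2 - q)) ^ (p / (2 - p)) * y ^ (N - q - 1))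
        = (A * ω) *
          ∫ y in Ioi (0:ℝ), N * ((1 + y ^ (2 - q)) ^ (p / (2 - p)) * y ^ (N - q - 1)) := by
      rw [integral_const_mul]
      ring
    rw [h1, ENNReal.ofReal_mul (by positivity)]
    refine mul_le_mul_right ?_ _
    have hnn : 0 ≤ᵐ[volume.restrict (Ioi (0:ℝ))]
        fun y => N * ((1 + y ^ (2 - q)) ^ (p / (2 - p)) * y ^ (N - q - 1)) := by
      filter_upwards [ae_restrict_mem measurableSet_Ioi] with y hy
      have hy0 : (0:ℝ) < y := hy
      have hbase : (0:ℝ) ≤ 1 + y ^ (2 - q) := by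
        have := Real.rpow_nonneg hy0.le (2 - q); linarith
      exact mul_nonneg hN0.le
        (mul_nonneg (Real.rpow_nonneg hbase _) (Real.rpow_nonneg hy0.le _))
    simpa [hGdef] using ofReal_integral_le_lintegral_ofReal' hnn
  refine le_trans hGL ?_
  rw [hKsup]
  apply ENNReal.le_of_forall_lt_one_mul_le
  intro a ha
  have hane : a ≠ ⊤ := (ha.trans_le le_top).ne
  have hr1 : a.toReal < 1 := by
    rw [← ENNReal.ofReal_one] at ha
    exact (ENNReal.lt_ofReal_iff_toReal_lt hane).mp ha
  set r := a.toReal with hrdef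
  have hr0 : 0 ≤ r := ENNReal.toReal_nonneg
  have h1r : 0 < 1 - r := by linarith
  set ε := A * (1 - r) / 2 with hεdef
  have hε : 0 < ε := by positivity
  have hεA : ε < A := by nlinarith
  have hle : a * ENNReal.ofReal (A * ω) ≤ ENNReal.ofReal ((A - ε) * ω) := by
    rw [← ENNReal.ofReal_toReal hane, ← ENNReal.ofReal_mul hr0]
    apply ENNReal.ofReal_le_ofReal
    nlinarith [mul_nonneg (mul_nonneg hA.le (sub_nonneg.2 hr1.le)) hω.le]
  calc a * (ENNReal.ofReal (A * ω) * ⨆ n : ℕ, K (n:ℝ))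
      = (a * ENNReal.ofReal (A * ω)) * ⨆ n : ℕ, K (n:ℝ) := by rw [mul_assoc]
    _ ≤ ENNReal.ofReal ((A - ε) * ω) * ⨆ n : ℕ, K (n:ℝ) := mul_le_mul_left hle _
    _ = ⨆ n : ℕ, ENNReal.ofReal ((A - ε) * ω) * K (n:ℝ) := ENNReal.mul_iSup _ _
    _ ≤ liminf F (nhdsWithin (0:ℝ) (Ioi 0)) := by
        refine iSup_le fun n => ?_
        cases n with
        | zero =>
          have hK0 : K ((0:ℕ):ℝ) = 0 := by
            rw [hKdef]; simp
          rw [hK0, mul_zero]; exact zero_le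
        | succ k =>
          exact hliminf ε hε hεA _ (by exact_mod_cast Nat.succ_pos k)
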